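/- For every positive integer n, 2 * (2^(2n) - 1) * B_{2n} is an integer, where B_{2n} denotes the (2n)-th Bernoulli number (a rational number). -/

import Mathlib

open Finset



/-- `q` is `p`-integral: `p` does not divide its denominator. -/
def BPI (p : ℕ) (q : ℚ) : Prop := ¬ (p ∣ q.den)

lemma BPI_intCast {p : ℕ} (hp : p.Prime) (m : ℤ) : BPI p (m : ℚ) := by
  simp only [BPI, Rat.den_intCast, Nat.dvd_one]
  exact hp.ne_one

lemma BPI_natCast {p : ℕ} (hp : p.Prime) (m : ℕ) : BPI p (m : ℚ) := by
  simpa using BPI_intCast hp (m : ℤ)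

lemma BPI.add {p : ℕ} (hp : p.Prime) {q r : ℚ} (h1 : BPI p q) (h2 : BPI p r) :
    BPI p (q + r) := by
  intro hd
  rcases (Nat.Prime.dvd_mul hp).1 (hd.trans (Rat.add_den_dvd q r)) with h | h
  exacts [h1 h, h2 h]

lemma BPI.mul {p : ℕ} (hp : p.Prime) {q r : ℚ} (h1 : BPI p q) (h2 : BPI p r) :
    BPI p (q * r) := by
  intro hd
  rcases (Nat.Prime.dvd_mul hp).1 (hd.trans (Rat.mul_den_dvd q r)) with h | h
  exacts [h1 h, h2 h]

lemma BPI.neg {p : ℕ} {q : ℚ} (h1 : BPI p q) : BPI p (-q) := by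
  simpa [BPI, Rat.neg_den] using h1

lemma BPI.sub {p : ℕ} (hp : p.Prime) {q r : ℚ} (h1 : BPI p q) (h2 : BPI p r) :
    BPI p (q - r) := by
  rw [sub_eq_add_neg]; exact BPI.add hp h1 h2.neg



lemma BPI.sum {p : ℕ} (hp : p.Prime) {s : Finset ℕ} {f : ℕ → ℚ}
    (h : ∀ i ∈ s, BPI p (f i)) : BPI p (∑ i ∈ s, f i) := by
  classical
  induction s using Finset.induction_on with
  | empty => simpa [BPI] using hp.ne_one
  | insert _ _ hx ih =>
    rw [Finset.sum_insert hx]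
    intro hd
    rcases (Nat.Prime.dvd_mul hp).1 (hd.trans (Rat.add_den_dvd _ _)) with hc | hc
    · exact h _ (Finset.mem_insert_self _ _) hc
    · exact ih (fun i hi => h i (Finset.mem_insert_of_mem hi)) hc

-- den of nat division
lemma BPI_div_nat {p : ℕ} (hp : p.Prime) {a u : ℕ} (hu : ¬ p ∣ u) :
    BPI p ((a : ℚ) / (u : ℚ)) := by
  intro hd
  apply hu
  have h1 : ((Rat.divInt (a : ℤ) (u : ℤ)).den : ℤ) ∣ (u : ℤ) := Rat.den_dvd a u
  rw [Rat.divInt_eq_div] at h1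
  have h2 : ((a : ℚ) / (u : ℚ)) = ((a : ℤ) : ℚ) / ((u : ℤ) : ℚ) := by push_cast; ring
  rw [h2] at hd
  exact_mod_cast dvd_trans (Int.natCast_dvd_natCast.2 hd) h1

lemma BPI_pow_div {p : ℕ} (hp : p.Prime) {c j : ℕ} (hj : j ≠ 0)
    (hc : j.factorization p ≤ c) : BPI p ((p : ℚ) ^ c / (j : ℚ)) := by
  set v := j.factorization p with hv
  have hjj : p ^ v * (j / p ^ v) = j := Nat.ordProj_mul_ordCompl_eq_self j p
  have hu : ¬ p ∣ (j / p ^ v) := Nat.not_dvd_ordCompl hp hj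
  have hps : (p : ℚ) ^ v ≠ 0 := pow_ne_zero _ (by exact_mod_cast hp.pos.ne')
  have key : (p : ℚ) ^ c / (j : ℚ) = ((p ^ (c - v) : ℕ) : ℚ) / ((j / p ^ v : ℕ) : ℚ) := by
    have h2 : (j : ℚ) = (p : ℚ) ^ v * ((j / p ^ v : ℕ) : ℚ) := by
      exact_mod_cast (congrArg (fun m : ℕ => (m : ℚ)) hjj).symm
    rw [h2]
    push_cast
    have hpne : (p : ℚ) ≠ 0 := by exact_mod_cast hp.pos.ne'
    rw [div_mul_eq_div_div_swap, div_right_comm, pow_sub₀ (p : ℚ) hpne hc,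
      div_eq_mul_inv (_ : ℚ) ((p:ℚ) ^ v)]
  rw [key]
  exact BPI_div_nat hp hu


lemma three_pow_aux : ∀ m : ℕ, m + 2 < 3 ^ (m + 1)
  | 0 => by norm_num
  | m + 1 => by
    have ih := three_pow_aux m
    calc m + 1 + 2 < 3 * (m + 2) := by omega
    _ ≤ 3 * 3 ^ (m + 1) := by omega
    _ = 3 ^ (m + 2) := by ring

lemma factorization_le_sub_one {p j : ℕ} (hp : p.Prime) (hj : j ≠ 0) :
    j.factorization p ≤ j - 1 := by
  by_contra h
  push_neg at h
  have hv : j ≤ j.factorization p := by omega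
  have h1 : p ^ j ≤ p ^ j.factorization p := Nat.pow_le_pow_right hp.pos hv
  have h2 : p ^ j.factorization p ≤ j := Nat.ordProj_le p hj
  have h3 : j < 2 ^ j := Nat.lt_two_pow_self
  have h4 : 2 ^ j ≤ p ^ j := Nat.pow_le_pow_left hp.two_le j
  omega

lemma factorization_le_sub_two {p j : ℕ} (hp : p.Prime) (hp3 : 3 ≤ p) (hj : 2 ≤ j) :
    j.factorization p ≤ j - 2 := by
  by_contra h
  push_neg at h
  have hv : j - 1 ≤ j.factorization p := by omega
  have h1 : p ^ (j - 1) ≤ p ^ j.factorization p := Nat.pow_le_pow_right hp.pos hv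
  have h2 : p ^ j.factorization p ≤ j := Nat.ordProj_le p (by omega)
  have h3 : j < 3 ^ (j - 1) := by
    have h5 := three_pow_aux (j - 2)
    have e1 : j - 2 + 1 = j - 1 := by omega
    have e2 : j - 2 + 2 = j := by omega
    rw [e1, e2] at h5
    exact h5
  have h4 : 3 ^ (j - 1) ≤ p ^ (j - 1) := Nat.pow_le_pow_left hp3 _
  omega

lemma faul_eq (p n : ℕ) :
    (p : ℚ) * bernoulli n = (∑ i ∈ range p, (i : ℚ) ^ n) -
      ∑ k ∈ range n, bernoulli k * (n.choose k : ℚ) *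
        ((p : ℚ) ^ (n + 1 - k) / ((n + 1 - k : ℕ) : ℚ)) := by
  have h := sum_range_pow p n
  rw [Finset.sum_range_succ] at h
  have hlast : bernoulli n * (((n + 1).choose n : ℕ) : ℚ) * (p : ℚ) ^ (n + 1 - n) / ((n : ℚ) + 1)
      = (p : ℚ) * bernoulli n := by
    rw [Nat.choose_succ_self_right]
    have e : n + 1 - n = 1 := by omega
    rw [e]
    have h1 : ((n : ℚ) + 1) ≠ 0 := by positivity
    push_cast
    field_simp
  have hsum : ∀ k ∈ range n,
      bernoulli k * (((n + 1).choose k : ℕ) : ℚ) * (p : ℚ) ^ (n + 1 - k) / ((n : ℚ) + 1)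
      = bernoulli k * (n.choose k : ℚ) * ((p : ℚ) ^ (n + 1 - k) / ((n + 1 - k : ℕ) : ℚ)) := by
    intro k hk
    rw [mem_range] at hk
    have key : (n.choose k : ℚ) * ((n : ℚ) + 1)
        = (((n + 1).choose k : ℕ) : ℚ) * ((n + 1 - k : ℕ) : ℚ) := by
      exact_mod_cast congrArg (fun m : ℕ => (m : ℚ)) (Nat.choose_mul_succ_eq n k)
    have h1 : ((n : ℚ) + 1) ≠ 0 := by positivity
    have h2 : ((n + 1 - k : ℕ) : ℚ) ≠ 0 := by
      have : 0 < n + 1 - k := by omega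
      exact_mod_cast this.ne'
    field_simp
    linear_combination (-(bernoulli k) * (p : ℚ) ^ (n + 1 - k)) * key
  rw [Finset.sum_congr rfl hsum, hlast] at h
  linarith [h]


lemma sum_pow_dvd {p n : ℕ} (hp : p.Prime) (hn : 1 ≤ n) (hdvd : ¬ (p - 1) ∣ n) :
    p ∣ ∑ i ∈ range p, i ^ n := by
  haveI : Fact p.Prime := ⟨hp⟩
  haveI : NeZero p := ⟨hp.pos.ne'⟩
  rw [← ZMod.natCast_eq_zero_iff]
  push_cast
  have h1 : (∑ i ∈ range p, ((i : ZMod p)) ^ n) = ∑ x : ZMod p, x ^ n := by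
    refine Finset.sum_nbij' (fun i => (i : ZMod p)) (fun x => x.val) ?_ ?_ ?_ ?_ ?_
    · intro a _; exact mem_univ _
    · intro a _; exact mem_range.2 (ZMod.val_lt _)
    · intro a ha; exact ZMod.val_cast_of_lt (mem_range.1 ha)
    · intro a _; exact ZMod.natCast_rightInverse a
    · intro a _; rfl
  have h2 : (∑ x : ZMod p, x ^ n) = ∑ x : (ZMod p)ˣ, ((x : ZMod p)) ^ n := by
    classical
    let φ : (ZMod p)ˣ ↪ ZMod p := ⟨fun x ↦ x, fun _ _ h => Units.ext h⟩
    have hmap : univ.map φ = univ \ {0} := by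
      ext x
      simp only [mem_map, mem_univ, Function.Embedding.coeFn_mk, true_and, mem_sdiff,
        mem_singleton, φ]
      constructor
      · rintro ⟨a, rfl⟩; exact a.ne_zero
      · intro hx; exact ⟨Units.mk0 x hx, rfl⟩
    rw [Finset.sum_eq_sum_sdiff_singleton_add (mem_univ (0 : ZMod p)) (fun x => x ^ n),
      zero_pow (by omega : n ≠ 0), add_zero, ← hmap, Finset.sum_map]
    rfl
  have h3 := FiniteField.sum_pow_units (ZMod p) n
  rw [ZMod.card] at h3
  rw [if_neg hdvd] at h3
  rw [h1, h2]
  simpa using h3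













lemma claim1 {p : ℕ} (hp : p.Prime) : ∀ n : ℕ, BPI p ((p : ℚ) * bernoulli n) := by
  intro n
  induction n using Nat.strong_induction_on with
  | _ n ih =>
    rw [faul_eq p n]
    apply BPI.sub hp
    · refine BPI.sum hp (fun i _ => ?_)
      rw [show ((i : ℚ)) ^ n = ((i ^ n : ℕ) : ℚ) by push_cast; ring]
      exact BPI_natCast hp _
    · refine BPI.sum hp (fun k hk => ?_)
      rw [mem_range] at hk
      have e : bernoulli k * (n.choose k : ℚ) *
          ((p : ℚ) ^ (n + 1 - k) / ((n + 1 - k : ℕ) : ℚ))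
          = (n.choose k : ℚ) * ((p : ℚ) ^ (n + 1 - k - 1) / ((n + 1 - k : ℕ) : ℚ)) *
            ((p : ℚ) * bernoulli k) := by
        have hpe : (p : ℚ) ^ (n + 1 - k) = (p : ℚ) ^ (n + 1 - k - 1) * (p : ℚ) := by
          rw [← pow_succ]
          congr 1
          omega
        rw [hpe]; ring
      rw [e]
      refine BPI.mul hp (BPI.mul hp (BPI_natCast hp _) ?_) (ih k hk)
      exact BPI_pow_div hp (by omega) (by
        have := factorization_le_sub_one hp (show n + 1 - k ≠ 0 by omega); omega)

lemma claim2 {p n : ℕ} (hp : p.Prime) (hp3 : 3 ≤ p) (hn : 1 ≤ n)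
    (hdvd : ¬ (p - 1) ∣ n) : BPI p (bernoulli n) := by
  obtain ⟨c, hc⟩ := sum_pow_dvd hp hn hdvd
  have hp0 : (p : ℚ) ≠ 0 := by exact_mod_cast hp.pos.ne'
  have h := faul_eq p n
  have key : bernoulli n = (c : ℚ) -
      ∑ k ∈ range n, (n.choose k : ℚ) * ((p : ℚ) ^ (n + 1 - k - 2) / ((n + 1 - k : ℕ) : ℚ)) *
        ((p : ℚ) * bernoulli k) := by
    have hs2 : (∑ i ∈ range p, (i : ℚ) ^ n) = (p : ℚ) * (c : ℚ) := by
      have h5 : ((∑ i ∈ range p, i ^ n : ℕ) : ℚ) = ((p * c : ℕ) : ℚ) := by rw [hc]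
      push_cast at h5
      simpa using h5
    rw [hs2] at h
    have hterm : ∀ k ∈ range n, bernoulli k * (n.choose k : ℚ) *
        ((p : ℚ) ^ (n + 1 - k) / ((n + 1 - k : ℕ) : ℚ))
        = (p : ℚ) * ((n.choose k : ℚ) * ((p : ℚ) ^ (n + 1 - k - 2) / ((n + 1 - k : ℕ) : ℚ)) *
          ((p : ℚ) * bernoulli k)) := by
      intro k hk
      rw [mem_range] at hk
      have hpe : (p : ℚ) ^ (n + 1 - k) = (p : ℚ) * (p : ℚ) ^ (n + 1 - k - 2) * (p : ℚ) := by
        have e2 : n + 1 - k = (n + 1 - k - 2) + 2 := by omega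
        conv_lhs => rw [e2]
        rw [pow_add]; ring
      rw [hpe]; ring
    rw [Finset.sum_congr rfl hterm, ← Finset.mul_sum] at h
    apply mul_left_cancel₀ hp0
    rw [mul_sub]
    linarith [h]
  rw [key]
  refine BPI.sub hp (BPI_natCast hp c) (BPI.sum hp (fun k hk => ?_))
  rw [mem_range] at hk
  refine BPI.mul hp (BPI.mul hp (BPI_natCast hp _) ?_) (claim1 hp k)
  refine BPI_pow_div hp (by omega) ?_
  have := factorization_le_sub_two hp hp3 (show 2 ≤ n + 1 - k by omega)
  omega

lemma fermat_dvd {p n : ℕ} (hp : p.Prime) (hp3 : 3 ≤ p) (hdvd : (p - 1) ∣ 2 * n) :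
    (p : ℤ) ∣ 2 ^ (2 * n) - 1 := by
  haveI : Fact p.Prime := ⟨hp⟩
  rw [← ZMod.intCast_zmod_eq_zero_iff_dvd]
  push_cast
  obtain ⟨m, hm⟩ := hdvd
  have h2 : (2 : ZMod p) ≠ 0 := by
    intro h
    have h5 := (ZMod.natCast_eq_zero_iff 2 p).1 (by exact_mod_cast h)
    have h6 := Nat.le_of_dvd (by norm_num) h5
    omega
  have := ZMod.pow_card_sub_one_eq_one h2
  rw [hm, pow_mul, this, one_pow]
  ring

theorem two_mul_two_pow_sub_one_mul_bernoulli_isInt (n : ℕ) (hn : 0 < n) :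
    ∃ m : ℤ, 2 * ((2 : ℚ) ^ (2 * n) - 1) * bernoulli (2 * n) = (m : ℚ) := by
  set q : ℚ := 2 * ((2 : ℚ) ^ (2 * n) - 1) * bernoulli (2 * n) with hq
  suffices hden : q.den = 1 by
    exact ⟨q.num, (Rat.coe_int_num_of_den_eq_one hden).symm⟩
  by_contra hden
  obtain ⟨p, hp, hpd⟩ := Nat.exists_prime_and_dvd hden
  have hA : ((2 : ℚ) ^ (2 * n) - 1) = (((2 ^ (2 * n) - 1 : ℤ)) : ℚ) := by push_cast; ring
  rcases eq_or_ne p 2 with rfl | hp2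
  · -- p = 2
    have : BPI 2 q := by
      rw [hq, hA, show (2 : ℚ) * (((2 ^ (2 * n) - 1 : ℤ)) : ℚ) * bernoulli (2 * n)
        = (((2 ^ (2 * n) - 1 : ℤ)) : ℚ) * (((2 : ℕ) : ℚ) * bernoulli (2 * n)) by push_cast; ring]
      exact BPI.mul hp (BPI_intCast hp _) (claim1 hp (2 * n))
    exact this hpd
  · have hp3 : 3 ≤ p := by have := hp.two_le; omega
    by_cases hd : (p - 1) ∣ 2 * n
    · obtain ⟨c, hc⟩ := fermat_dvd hp hp3 hd
      have : BPI p q := by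
        rw [hq, hA, hc, show (2 : ℚ) * (((p : ℤ) * c : ℤ) : ℚ) * bernoulli (2 * n)
          = ((2 * c : ℤ) : ℚ) * ((p : ℚ) * bernoulli (2 * n)) by push_cast; ring]
        exact BPI.mul hp (BPI_intCast hp _) (claim1 hp (2 * n))
      exact this hpd
    · have : BPI p q := by
        rw [hq, hA, show (2 : ℚ) * (((2 ^ (2 * n) - 1 : ℤ)) : ℚ) * bernoulli (2 * n)
          = ((2 * (2 ^ (2 * n) - 1) : ℤ) : ℚ) * bernoulli (2 * n) by push_cast; ring]
        exact BPI.mul hp (BPI_intCast hp _) (claim2 hp hp3 (by omega) hd)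
      exact this hpd
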